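/- At the optimal regularization λ = dσ²/‖β*‖² for isotropic linear ridge regression, the deterministic equivalents satisfy the exact linear trade-off R = ‖β*‖² − N: concretely, with Σ = I_d, B_N = ‖β*‖²/(1+λ*)² + (d/(n(1+λ*)²))·(λ*²‖β*‖²/(1+λ*)²)/(1 − d/(n(1+λ*)²)), V_N = σ²(d/(1+λ*)²)/(n − d/(1+λ*)²), B_R = (λ*²‖β*‖²/(1+λ*)²)/(1 − d/(n(1+λ*)²)), V_R = V_N, and λ* solving n − λ/λ* = d/(1+λ*) with λ = dσ²/‖β*‖², one has (B_R + V_R) + (B_N + V_N) = ‖β*‖². -/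

import Mathlib

/-- At the optimal regularization `λ = dσ²/‖β*‖²` for isotropic linear ridge
regression, the deterministic equivalents satisfy the exact linear trade-off
`R + N = ‖β*‖²`. -/
theorem optimal_regularization_linear_tradeoff
    (n d σ2 b lam lamstar : ℝ)
    (hn : 0 < n) (hd : 0 < d) (hσ : 0 < σ2) (hb : 0 < b)
    (hlam : lam = d * σ2 / b)
    (hlamstar : 0 < lamstar)
    (hcond : d < n * (1 + lamstar) ^ 2)
    (hsc : n - lam / lamstar = d / (1 + lamstar)) :
    (((lamstar ^ 2 * b / (1 + lamstar) ^ 2) / (1 - d / (n * (1 + lamstar) ^ 2)))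
      + σ2 * (d / (1 + lamstar) ^ 2) / (n - d / (1 + lamstar) ^ 2))
    + ((b / (1 + lamstar) ^ 2
        + (d / (n * (1 + lamstar) ^ 2)) *
          ((lamstar ^ 2 * b / (1 + lamstar) ^ 2) / (1 - d / (n * (1 + lamstar) ^ 2))))
      + σ2 * (d / (1 + lamstar) ^ 2) / (n - d / (1 + lamstar) ^ 2))
    = b := by
  subst hlam
  have ht : (0:ℝ) < 1 + lamstar := by linarith
  have hE : 0 < n * (1 + lamstar)^2 - d := by linarith
  have h1 : (1 : ℝ) - d / (n * (1 + lamstar) ^ 2) ≠ 0 := by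
    have h : (1:ℝ) - d / (n * (1 + lamstar) ^ 2) = (n * (1 + lamstar)^2 - d)/(n * (1 + lamstar)^2) := by
      field_simp
    rw [h]; positivity
  have h2 : n - d / (1 + lamstar) ^ 2 ≠ 0 := by
    have h : n - d / (1 + lamstar) ^ 2 = (n * (1 + lamstar)^2 - d)/((1 + lamstar)^2) := by
      field_simp
    rw [h]; positivity
  have hσ2 : σ2 = b * lamstar * (n * (1 + lamstar) - d) / (d * (1 + lamstar)) := by
    field_simp at hsc ⊢
    linarith [hsc]
  subst hσ2
  have hE' : (1 + lamstar)^2 * n - d ≠ 0 := ne_of_gt (by linarith)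
  field_simp
  ring
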